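/- Let μ and μ' be two stable matchings of the same stable marriage instance such that every man weakly prefers μ to μ' (for every man m, either μ(m) = μ'(m) or μ(m) ≻_m μ'(m)). Then every woman weakly prefers μ' to μ: for every woman w, either μ'⁻¹(w) = μ⁻¹(w) or μ'⁻¹(w) ≻_w μ⁻¹(w). -/

import Mathlib

/-- A stable marriage instance: finite sets `M` of men and `W` of women of equal
positive cardinality, with strict total preference orders for each agent. -/
structure SMInstance (M W : Type) [Fintype M] [Fintype W] where
  card_eq : Fintype.card M = Fintype.card W
  card_pos : 1 ≤ Fintype.card M
  prefM : M → W → W → Prop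
  prefW : W → M → M → Prop
  prefM_sto : ∀ m, IsStrictTotalOrder W (prefM m)
  prefW_sto : ∀ w, IsStrictTotalOrder M (prefW w)

/-- A pair `(m, w)` blocks the matching `μ` if `w ≻_m μ(m)` and `m ≻_w μ⁻¹(w)`. -/
def SMInstance.Blocks {M W : Type} [Fintype M] [Fintype W]
    (I : SMInstance M W) (μ : M ≃ W) (m : M) (w : W) : Prop :=
  I.prefM m w (μ m) ∧ I.prefW w m (μ.symm w)

/-- A matching is stable if no pair blocks it. -/
def SMInstance.Stable {M W : Type} [Fintype M] [Fintype W]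
    (I : SMInstance M W) (μ : M ≃ W) : Prop :=
  ∀ m w, ¬ I.Blocks μ m w

/-- If every man weakly prefers the stable matching `μ` to the stable matching `μ'`,
then every woman weakly prefers `μ'` to `μ`. -/
theorem men_better_implies_women_worse {M W : Type} [Fintype M] [Fintype W]
    (I : SMInstance M W) (μ μ' : M ≃ W) (hμ : I.Stable μ) (hμ' : I.Stable μ')
    (hmen : ∀ m : M, μ m = μ' m ∨ I.prefM m (μ m) (μ' m)) :
    ∀ w : W, μ'.symm w = μ.symm w ∨ I.prefW w (μ'.symm w) (μ.symm w) := by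
  intro w
  set m := μ.symm w with hm
  set m' := μ'.symm w with hm'
  by_cases heq : m' = m
  · exact Or.inl heq
  · right
    rcases (show I.prefW w m' m ∨ m' = m ∨ I.prefW w m m' by by_contra hc; push_neg at hc; exact hc.2.1 ((I.prefW_sto w).trichotomous m' m hc.1 hc.2.2)) with h | h | h
    · exact h
    · exact absurd h heq
    · -- prefW w m m', so (m, w) blocks μ'
      exfalso
      have hmw : μ m = w := μ.apply_symm_apply w
      have hne : μ' m ≠ w := by
        intro hc
        exact heq (by rw [hm', ← hc, Equiv.symm_apply_apply])
      rcases hmen m with h1 | h1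
      · exact hne (h1 ▸ hmw)
      · exact hμ' m w ⟨hmw ▸ h1, h⟩
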